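/- arXiv:1308.1130 — 4 statements merged into one kernel-verified Lean document; each statement's English description precedes it below -/
import Mathlib

section
/- Let T be a bounded operator on a Hilbert space H and M a closed subspace of H that is invariant under the adjoint T*. Suppose the compression P_M T restricted to M is hyponormal, i.e. ‖(P_M T|_M)* g‖ ≤ ‖P_M T g‖ for all g ∈ M. If f ∈ M satisfies ‖T* f‖ = ‖T f‖, then T f ∈ M. -/
/-- If the compression of `T` to a co-invariant closed subspace `M` is hyponormal
(note `(P_M T|_M)* g = T* g` for `g ∈ M` by co-invariance), and `f ∈ M` satisfies
`‖T* f‖ = ‖T f‖`, then `T f ∈ M`. -/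
theorem compression_hyponormal_isometric_mem
    {H : Type*} [NormedAddCommGroup H] [InnerProductSpace ℂ H] [CompleteSpace H]
    (T : H →L[ℂ] H) (M : Submodule ℂ H) [CompleteSpace M]
    (hcoinv : ∀ x ∈ M, ContinuousLinearMap.adjoint T x ∈ M)
    (hhypo : ∀ g ∈ M, ‖ContinuousLinearMap.adjoint T g‖ ≤ ‖(Submodule.orthogonalProjection M (T g) : H)‖)
    (f : H) (hf : f ∈ M) (hnorm : ‖ContinuousLinearMap.adjoint T f‖ = ‖T f‖) :
    T f ∈ M := by
  have h1 := Submodule.norm_sq_eq_add_norm_sq_projection (T f) M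
  have h2 : ‖T f‖ ≤ ‖(Submodule.orthogonalProjection M (T f) : H)‖ := hnorm ▸ hhypo f hf
  have h2' : ‖T f‖ ≤ ‖(Submodule.orthogonalProjectionOnto M) (T f)‖ := h2
  have h3' : ‖(Submodule.orthogonalProjectionOnto Mᗮ) (T f)‖ = 0 := by nlinarith [norm_nonneg ((Submodule.orthogonalProjectionOnto Mᗮ) (T f)), norm_nonneg (T f)]
  have h3 : ‖(Submodule.orthogonalProjection Mᗮ (T f) : H)‖ = 0 := h3'
  have h4 : (Submodule.orthogonalProjection Mᗮ (T f) : H) = 0 := norm_eq_zero.mp h3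
  have h5 : T f ∈ Mᗮᗮ := by
    rw [← Submodule.orthogonalProjectionOnto_eq_zero_iff]
    exact Subtype.ext h4
  rwa [Submodule.orthogonal_orthogonal] at h5
end

section
/- In the Drury–Arveson space H²₂ on the unit ball of ℂ², realized as the symmetric Fock space where the monomial z₁^m z₂^n has squared norm m! n! / (m+n)!, the multiplication operator M_{z₁z₂} satisfies ‖M_{z₁z₂}(z₁z₂)‖² = 1/6 and ‖M_{z₁z₂}*(z₁z₂)‖² = 1/4; in particular M_{z₁z₂} is not hyponormal. -/
/-- In the Drury–Arveson space `H²₂`, realized as the symmetric Fock space where the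
monomial `z₁^m z₂^n` (here `e (m, n)`) has squared norm `m! n! / (m+n)!`, the
multiplication operator `M = M_{z₁z₂}` satisfies `‖M (z₁z₂)‖² = 1/6` and
`‖M* (z₁z₂)‖² = 1/4`; in particular `M` is not hyponormal. -/
theorem DruryArveson_multiplication_not_hyponormal
    {H : Type*} [NormedAddCommGroup H] [InnerProductSpace ℂ H] [CompleteSpace H]
    (e : ℕ × ℕ → H)
    (horth : ∀ α β, α ≠ β → (inner ℂ (e α) (e β) : ℂ) = 0)
    (hnorm : ∀ m n, ‖e (m, n)‖ ^ 2 =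
      (Nat.factorial m * Nat.factorial n : ℝ) / (Nat.factorial (m + n) : ℝ))
    (hdense : Dense ((Submodule.span ℂ (Set.range e) : Submodule ℂ H) : Set H))
    (M : H →L[ℂ] H) (hM : ∀ m n, M (e (m, n)) = e (m + 1, n + 1)) :
    ‖M (e (1, 1))‖ ^ 2 = 1 / 6 ∧
    ‖ContinuousLinearMap.adjoint M (e (1, 1))‖ ^ 2 = 1 / 4 ∧
    ¬ (∀ x, ‖ContinuousLinearMap.adjoint M x‖ ≤ ‖M x‖) := by
  have h1 : ‖M (e (1, 1))‖ ^ 2 = 1 / 6 := by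
    rw [hM 1 1, hnorm 2 2]
    norm_num [Nat.factorial]
  -- identify M* (e (1,1)) with (1/2) • e (0,0)
  have key : ContinuousLinearMap.adjoint M (e (1, 1)) = (1 / 2 : ℂ) • e (0, 0) := by
    refine hdense.eq_of_inner_right ℂ fun v hv => ?_
    refine Submodule.span_induction ?_ ?_ ?_ ?_ hv
    · rintro _ ⟨⟨m, n⟩, rfl⟩
      show (inner ℂ (e (m, n)) (ContinuousLinearMap.adjoint M (e (1, 1))) : ℂ) =
        inner ℂ (e (m, n)) ((1 / 2 : ℂ) • e (0, 0))
      rw [ContinuousLinearMap.adjoint_inner_right, hM m n, inner_smul_right]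
      rcases Nat.eq_zero_or_pos (m + n) with hmn | hmn
      · obtain ⟨hm, hn⟩ := Nat.add_eq_zero.mp hmn
        subst hm; subst hn
        rw [inner_self_eq_norm_sq_to_K, inner_self_eq_norm_sq_to_K]
        simp only [zero_add]
        norm_cast
        rw [hnorm 1 1, hnorm 0 0]
        norm_num [Nat.factorial]
      · rw [horth (m + 1, n + 1) (1, 1) (by simp; omega),
          horth (m, n) (0, 0) (by simp; omega)]
        ring
    · simp
    · intro x y _ _ hx hy
      rw [inner_add_left, inner_add_left, hx, hy]
    · intro c x _ hx
      rw [inner_smul_left, inner_smul_left, hx]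
  have h2 : ‖ContinuousLinearMap.adjoint M (e (1, 1))‖ ^ 2 = 1 / 4 := by
    rw [key, norm_smul, mul_pow, hnorm 0 0]
    norm_num [Nat.factorial]
  refine ⟨h1, h2, fun h => ?_⟩
  have := h (e (1, 1))
  have h1' : ‖M (e (1, 1))‖ = Real.sqrt (1 / 6) := by
    rw [← h1]; simp [Real.sqrt_sq (norm_nonneg _)]
  have h2' : ‖ContinuousLinearMap.adjoint M (e (1, 1))‖ = Real.sqrt (1 / 4) := by
    rw [← h2]; simp [Real.sqrt_sq (norm_nonneg _)]
  rw [h1', h2'] at this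
  have := Real.sqrt_le_sqrt_iff (by norm_num : (0:ℝ) ≤ 1/6) |>.mp this
  linarith
end

section
/- Let F ⊆ H²_d be a closed subspace co-invariant under all multiplication operators such that for every w ∈ B_d the compression of M_{⟨·,w⟩} to F is hyponormal. If the constant function 1 lies in F and k_d(·, z) ∈ F for some z ∈ B_d, then the linear function ⟨·, z⟩ lies in F. -/
/-- A reproducing kernel Hilbert space of `ℂ`-valued functions on `X`. -/
structure RKHSpace (X : Type*) (H : Type*) [NormedAddCommGroup H] [InnerProductSpace ℂ H] where
  toFun : H →ₗ[ℂ] (X → ℂ)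
  injective : Function.Injective toFun
  kernelVec : X → H
  reproducing : ∀ (f : H) (x : X), toFun f x = (inner ℂ (kernelVec x) f : ℂ)

open scoped ComplexConjugate
open Finset

local notation "⟪" x ", " y "⟫" => @inner ℂ _ _ x y

section Aux
variable {E : Type*} [NormedAddCommGroup E] [InnerProductSpace ℂ E]
variable {H : Type*} [NormedAddCommGroup H] [InnerProductSpace ℂ H]

/-- Cauchy–Schwarz positivity of the kernel `t⟪b,a⟫ - ⟪b,z⟫⟪z,a⟫`. -/
lemma gram_nonneg {ι : Type*} (z : E) (s : Finset ι) (w : ι → E) (d : ι → ℂ) :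
    0 ≤ (∑ a ∈ s, ∑ b ∈ s, conj (d a) * d b *
      ((‖z‖ : ℂ) ^ 2 * ⟪w b, w a⟫ - ⟪w b, z⟫ * ⟪z, w a⟫)).re := by
  set v : E := ∑ a ∈ s, conj (d a) • w a with hv
  have hvv : ⟪v, v⟫ = ∑ a ∈ s, ∑ b ∈ s, conj (d a) * d b * ⟪w b, w a⟫ := by
    rw [hv, sum_inner, Finset.sum_comm]
    refine Finset.sum_congr rfl fun a _ => ?_
    rw [inner_sum]
    refine Finset.sum_congr rfl fun b _ => ?_
    rw [inner_smul_left, inner_smul_right, RingHomInvPair.comp_apply_eq]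
    ring
  have hvz : ⟪v, z⟫ = ∑ b ∈ s, d b * ⟪w b, z⟫ := by
    rw [hv, sum_inner]
    refine Finset.sum_congr rfl fun b _ => ?_
    rw [inner_smul_left, RingHomInvPair.comp_apply_eq]
  have hzv : ⟪z, v⟫ = ∑ a ∈ s, conj (d a) * ⟪z, w a⟫ := by
    rw [hv, inner_sum]
    refine Finset.sum_congr rfl fun a _ => ?_
    rw [inner_smul_right]
  have e1 : (‖z‖ : ℂ) ^ 2 * ⟪v, v⟫
      = ∑ a ∈ s, ∑ b ∈ s, (‖z‖ : ℂ) ^ 2 * (conj (d a) * d b * ⟪w b, w a⟫) := by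
    rw [hvv, Finset.mul_sum]
    exact Finset.sum_congr rfl fun a _ => Finset.mul_sum _ _ _
  have e2 : ⟪v, z⟫ * ⟪z, v⟫
      = ∑ a ∈ s, ∑ b ∈ s, (d b * ⟪w b, z⟫) * (conj (d a) * ⟪z, w a⟫) := by
    rw [hvz, hzv, Finset.sum_mul_sum]
    exact Finset.sum_comm
  have key : (∑ a ∈ s, ∑ b ∈ s, conj (d a) * d b *
      ((‖z‖ : ℂ) ^ 2 * ⟪w b, w a⟫ - ⟪w b, z⟫ * ⟪z, w a⟫))
      = (‖z‖ : ℂ) ^ 2 * ⟪v, v⟫ - ⟪v, z⟫ * ⟪z, v⟫ := by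
    rw [e1, e2, ← Finset.sum_sub_distrib]
    refine Finset.sum_congr rfl fun a _ => ?_
    rw [← Finset.sum_sub_distrib]
    refine Finset.sum_congr rfl fun b _ => ?_
    ring
  rw [key]
  have h1 : ⟪z, v⟫ = conj ⟪v, z⟫ := (inner_conj_symm z v).symm
  have h2 : ⟪v, v⟫ = ((‖v‖ : ℂ)) ^ 2 := inner_self_eq_norm_sq_to_K v
  rw [h1, h2, Complex.mul_conj]
  have hcs : ‖⟪v, z⟫‖ ≤ ‖v‖ * ‖z‖ := by
    simpa using norm_inner_le_norm (𝕜 := ℂ) v z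
  have hns : Complex.normSq ⟪v, z⟫ ≤ (‖v‖ * ‖z‖) ^ 2 := by
    rw [← Complex.sq_norm]
    exact pow_le_pow_left₀ (norm_nonneg _) hcs 2
  have : ((‖z‖ : ℂ) ^ 2 * ((‖v‖ : ℂ)) ^ 2 - (Complex.normSq ⟪v, z⟫ : ℂ)).re
      = ‖z‖ ^ 2 * ‖v‖ ^ 2 - Complex.normSq ⟪v, z⟫ := by
    simp [Complex.sub_re, ← Complex.ofReal_pow, ← Complex.ofReal_mul]
  rw [this]
  nlinarith [norm_nonneg v, norm_nonneg z]

lemma pow_gram_nonneg {ι : Type*} (z : E) (s : Finset ι) (w : ι → E) (c : ι → ℂ) (n : ℕ) :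
    0 ≤ (∑ a ∈ s, ∑ b ∈ s, conj (c a) * c b * (⟪w b, w a⟫ ^ n *
      ((‖z‖ : ℂ) ^ 2 * ⟪w b, w a⟫ - ⟪w b, z⟫ * ⟪z, w a⟫))).re := by
  classical
  set V := Submodule.span ℂ (w '' ↑s) with hV
  haveI : FiniteDimensional ℂ V :=
    FiniteDimensional.span_of_finite ℂ ((s.finite_toSet).image w)
  set B := stdOrthonormalBasis ℂ V
  set m := Module.finrank ℂ V
  set w' : ι → V := fun a => if h : w a ∈ V then (⟨w a, h⟩ : V) else 0 with hw'def
  have hw' : ∀ a ∈ s, ((w' a : E)) = w a := by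
    intro a ha
    have : w a ∈ V := Submodule.subset_span ⟨a, ha, rfl⟩
    simp [hw'def, this]
  set x : Fin m → ι → ℂ := fun k a => B.repr (w' a) k with hx
  have hq : ∀ a ∈ s, ∀ b ∈ s, ⟪w b, w a⟫ = ∑ k, conj (x k b) * x k a := by
    intro a ha b hb
    rw [← hw' a ha, ← hw' b hb]
    have h1 : (inner ℂ ((w' b : E)) ((w' a : E)) : ℂ) = ⟪B.repr (w' b), B.repr (w' a)⟫ :=
      ((Submodule.coe_inner V (w' b) (w' a)).symm).trans (B.repr.inner_map_map _ _).symm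
    rw [h1, PiLp.inner_apply]
    simp only [RCLike.inner_apply, hx]
    exact Finset.sum_congr rfl fun _ _ => mul_comm _ _
  set Y : (Fin n → Fin m) → ι → ℂ := fun p a => ∏ i, x (p i) a with hY
  have hpow : ∀ a ∈ s, ∀ b ∈ s, ⟪w b, w a⟫ ^ n
      = ∑ p ∈ Fintype.piFinset (fun _ : Fin n => (univ : Finset (Fin m))),
          conj (Y p b) * Y p a := by
    intro a ha b hb
    rw [hq a ha b hb, Finset.sum_pow']
    refine Finset.sum_congr rfl fun p _ => ?_
    rw [hY]
    simp only [Finset.prod_mul_distrib, map_prod]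
  have key : (∑ a ∈ s, ∑ b ∈ s, conj (c a) * c b * (⟪w b, w a⟫ ^ n *
        ((‖z‖ : ℂ) ^ 2 * ⟪w b, w a⟫ - ⟪w b, z⟫ * ⟪z, w a⟫)))
      = ∑ p ∈ Fintype.piFinset (fun _ : Fin n => (univ : Finset (Fin m))),
          ∑ a ∈ s, ∑ b ∈ s, conj (c a * conj (Y p a)) * (c b * conj (Y p b)) *
            ((‖z‖ : ℂ) ^ 2 * ⟪w b, w a⟫ - ⟪w b, z⟫ * ⟪z, w a⟫) := by
    have step1 : (∑ a ∈ s, ∑ b ∈ s, conj (c a) * c b * (⟪w b, w a⟫ ^ n *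
          ((‖z‖ : ℂ) ^ 2 * ⟪w b, w a⟫ - ⟪w b, z⟫ * ⟪z, w a⟫)))
        = ∑ a ∈ s, ∑ b ∈ s,
            ∑ p ∈ Fintype.piFinset (fun _ : Fin n => (univ : Finset (Fin m))),
            conj (c a * conj (Y p a)) * (c b * conj (Y p b)) *
              ((‖z‖ : ℂ) ^ 2 * ⟪w b, w a⟫ - ⟪w b, z⟫ * ⟪z, w a⟫) := by
      refine Finset.sum_congr rfl fun a ha => Finset.sum_congr rfl fun b hb => ?_
      rw [hpow a ha b hb, Finset.sum_mul, Finset.mul_sum]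
      refine Finset.sum_congr rfl fun p _ => ?_
      simp only [map_mul, Complex.conj_conj]
      ring
    rw [step1]
    rw [show (∑ a ∈ s, ∑ b ∈ s,
        ∑ p ∈ Fintype.piFinset (fun _ : Fin n => (univ : Finset (Fin m))),
        conj (c a * conj (Y p a)) * (c b * conj (Y p b)) *
          ((‖z‖ : ℂ) ^ 2 * ⟪w b, w a⟫ - ⟪w b, z⟫ * ⟪z, w a⟫))
        = ∑ a ∈ s,
        ∑ p ∈ Fintype.piFinset (fun _ : Fin n => (univ : Finset (Fin m))), ∑ b ∈ s,
        conj (c a * conj (Y p a)) * (c b * conj (Y p b)) *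
          ((‖z‖ : ℂ) ^ 2 * ⟪w b, w a⟫ - ⟪w b, z⟫ * ⟪z, w a⟫)
      from Finset.sum_congr rfl fun a _ => Finset.sum_comm]
    exact Finset.sum_comm
  rw [key, Complex.re_sum]
  refine Finset.sum_nonneg fun p _ => ?_
  exact gram_nonneg z s w (fun a => c a * conj (Y p a))

lemma geom_series_aux (t A q : ℂ) (hq : ‖q‖ < 1) :
    (t - A) * (1 - q)⁻¹ = t + ∑' n : ℕ, (t * q - A) * q ^ n := by
  have hq1 : (1 : ℂ) - q ≠ 0 := by
    rw [sub_ne_zero]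
    intro h
    rw [← h] at hq
    simp at hq
  have h2 : ∑' n : ℕ, (t * q - A) * q ^ n = (t * q - A) * (1 - q)⁻¹ := by
    rw [tsum_mul_left, tsum_geometric_of_norm_lt_one hq]
  rw [h2]
  field_simp
  ring

lemma ball_inner_lt (a b : {z : E // ‖z‖ < 1}) : ‖(⟪(b : E), (a : E)⟫ : ℂ)‖ < 1 := by
  have h1 := norm_inner_le_norm (𝕜 := ℂ) (b : E) (a : E)
  nlinarith [a.2, b.2, norm_nonneg (a : E), norm_nonneg (b : E)]

lemma norm_bound (R : RKHSpace {z : E // ‖z‖ < 1} H)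
    (hker : ∀ z w : {z : E // ‖z‖ < 1},
      R.toFun (R.kernelVec w) z = (1 - (inner ℂ (w : E) (z : E) : ℂ))⁻¹)
    (z : {z : E // ‖z‖ < 1}) (s : Finset {z : E // ‖z‖ < 1}) (c : {z : E // ‖z‖ < 1} → ℂ) :
    ‖∑ a ∈ s, (c a * conj ⟪(z : E), (a : E)⟫) • R.kernelVec a‖
      ≤ ‖(z : E)‖ * ‖∑ a ∈ s, c a • R.kernelVec a‖ := by
  classical
  set φ : {z : E // ‖z‖ < 1} → ℂ := fun a => ⟪(z : E), (a : E)⟫ with hφ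
  set k := R.kernelVec
  set u := ∑ a ∈ s, c a • k a with hu
  set v := ∑ a ∈ s, (c a * conj (φ a)) • k a with hv
  set t : ℂ := (‖(z : E)‖ : ℂ) ^ 2 with ht
  have hG : ∀ a b : {z : E // ‖z‖ < 1}, ⟪k a, k b⟫ = (1 - ⟪(b : E), (a : E)⟫)⁻¹ := by
    intro a b
    rw [← R.reproducing, hker]
  -- expansions of the two inner products
  have hGram : ∀ d : {z : E // ‖z‖ < 1} → ℂ,
      ⟪∑ a ∈ s, d a • k a, ∑ a ∈ s, d a • k a⟫
        = ∑ a ∈ s, ∑ b ∈ s, conj (d a) * d b * (1 - ⟪(b : E), (a : E)⟫)⁻¹ := by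
    intro d
    rw [sum_inner]
    refine Finset.sum_congr rfl fun a _ => ?_
    rw [inner_sum]
    refine Finset.sum_congr rfl fun b _ => ?_
    rw [inner_smul_left, inner_smul_right, hG a b]
    ring
  have huu : ⟪u, u⟫ = ∑ a ∈ s, ∑ b ∈ s, conj (c a) * c b * (1 - ⟪(b : E), (a : E)⟫)⁻¹ :=
    hGram c
  have hvv : ⟪v, v⟫ = ∑ a ∈ s, ∑ b ∈ s,
      conj (c a) * c b * (φ a * conj (φ b)) * (1 - ⟪(b : E), (a : E)⟫)⁻¹ := by
    rw [hGram (fun a => c a * conj (φ a))]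
    refine Finset.sum_congr rfl fun a _ => Finset.sum_congr rfl fun b _ => ?_
    simp only [map_mul, Complex.conj_conj]
    ring
  -- key positivity
  have hQ : 0 ≤ (t * ⟪u, u⟫ - ⟪v, v⟫).re := by
    have hsplit : t * ⟪u, u⟫ - ⟪v, v⟫ = ∑ a ∈ s, ∑ b ∈ s,
        conj (c a) * c b * ((t - φ a * conj (φ b)) * (1 - ⟪(b : E), (a : E)⟫)⁻¹) := by
      rw [huu, hvv, Finset.mul_sum, ← Finset.sum_sub_distrib]
      refine Finset.sum_congr rfl fun a _ => ?_
      rw [Finset.mul_sum, ← Finset.sum_sub_distrib]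
      refine Finset.sum_congr rfl fun b _ => ?_
      ring
    have hentry : ∀ a ∈ s, ∀ b ∈ s,
        conj (c a) * c b * ((t - φ a * conj (φ b)) * (1 - ⟪(b : E), (a : E)⟫)⁻¹)
          = conj (c a) * c b * t
            + ∑' n : ℕ, conj (c a) * c b *
                ((t * ⟪(b : E), (a : E)⟫ - φ a * conj (φ b)) * ⟪(b : E), (a : E)⟫ ^ n) := by
      intro a _ b _
      rw [tsum_mul_left, ← mul_add, geom_series_aux t (φ a * conj (φ b)) _ (ball_inner_lt a b)]
    have hsummable : ∀ a ∈ s, ∀ b ∈ s, Summable (fun n : ℕ =>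
        conj (c a) * c b *
          ((t * ⟪(b : E), (a : E)⟫ - φ a * conj (φ b)) * ⟪(b : E), (a : E)⟫ ^ n)) := by
      intro a _ b _
      exact ((summable_geometric_of_norm_lt_one (ball_inner_lt a b)).mul_left _).mul_left _
    have hsplit2 : t * ⟪u, u⟫ - ⟪v, v⟫
        = t * ((∑ a ∈ s, conj (c a)) * ∑ b ∈ s, c b)
          + ∑' n : ℕ, ∑ a ∈ s, ∑ b ∈ s, conj (c a) * c b *
              ((t * ⟪(b : E), (a : E)⟫ - φ a * conj (φ b)) * ⟪(b : E), (a : E)⟫ ^ n) := by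
      rw [hsplit]
      rw [Finset.sum_congr rfl fun a ha => Finset.sum_congr rfl fun b hb => hentry a ha b hb]
      rw [Finset.sum_congr rfl fun a (_ : a ∈ s) => Finset.sum_add_distrib,
        Finset.sum_add_distrib]
      congr 1
      · rw [Finset.sum_mul_sum, Finset.mul_sum]
        refine Finset.sum_congr rfl fun a _ => ?_
        rw [Finset.mul_sum]
        refine Finset.sum_congr rfl fun b _ => ?_
        ring
      · exact (Finset.sum_congr rfl fun a ha =>
            (Summable.tsum_finsetSum fun b hb => hsummable a ha b hb).symm).trans
          ((Summable.tsum_finsetSum fun a ha => summable_sum fun b hb => hsummable a ha b hb).symm)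
    rw [hsplit2, Complex.add_re]
    have h1 : 0 ≤ (t * ((∑ a ∈ s, conj (c a)) * ∑ b ∈ s, c b)).re := by
      have e : (∑ a ∈ s, conj (c a)) = conj (∑ b ∈ s, c b) := (map_sum (starRingEnd ℂ) _ _).symm
      rw [e, mul_comm (conj (∑ b ∈ s, c b)) (∑ b ∈ s, c b), Complex.mul_conj, ht]
      rw [show ((‖(z : E)‖ : ℂ) ^ 2 * (Complex.normSq (∑ b ∈ s, c b) : ℂ))
          = (((‖(z : E)‖ ^ 2 * Complex.normSq (∑ b ∈ s, c b) : ℝ)) : ℂ) by push_cast; ring]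
      rw [Complex.ofReal_re]
      have := Complex.normSq_nonneg (∑ b ∈ s, c b)
      positivity
    have hsum2 : Summable (fun n : ℕ => ∑ a ∈ s, ∑ b ∈ s, conj (c a) * c b *
        ((t * ⟪(b : E), (a : E)⟫ - φ a * conj (φ b)) * ⟪(b : E), (a : E)⟫ ^ n)) :=
      summable_sum fun a ha => summable_sum fun b hb => hsummable a ha b hb
    have h2 : 0 ≤ (∑' n : ℕ, ∑ a ∈ s, ∑ b ∈ s, conj (c a) * c b *
        ((t * ⟪(b : E), (a : E)⟫ - φ a * conj (φ b)) * ⟪(b : E), (a : E)⟫ ^ n)).re := by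
      rw [Complex.re_tsum hsum2]
      refine tsum_nonneg fun n => ?_
      have align : (∑ a ∈ s, ∑ b ∈ s, conj (c a) * c b *
          ((t * ⟪(b : E), (a : E)⟫ - φ a * conj (φ b)) * ⟪(b : E), (a : E)⟫ ^ n))
          = ∑ a ∈ s, ∑ b ∈ s, conj (c a) * c b *
            ((⟪(b : E), (a : E)⟫ : ℂ) ^ n * ((‖(z : E)‖ : ℂ) ^ 2 * ⟪(b : E), (a : E)⟫
              - ⟪(b : E), (z : E)⟫ * ⟪(z : E), (a : E)⟫)) := by
        refine Finset.sum_congr rfl fun a _ => Finset.sum_congr rfl fun b _ => ?_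
        rw [hφ, ht]
        rw [show conj (⟪(z : E), (b : E)⟫ : ℂ) = ⟪(b : E), (z : E)⟫ from inner_conj_symm _ _]
        ring
      rw [align]
      exact pow_gram_nonneg (z : E) s (fun a => (a : E)) c n
    linarith
  -- conclude
  have huu' : ⟪u, u⟫ = ((‖u‖ : ℂ)) ^ 2 := inner_self_eq_norm_sq_to_K u
  have hvv' : ⟪v, v⟫ = ((‖v‖ : ℂ)) ^ 2 := inner_self_eq_norm_sq_to_K v
  have e : t * ⟪u, u⟫ - ⟪v, v⟫ = (((‖(z : E)‖ ^ 2 * ‖u‖ ^ 2 - ‖v‖ ^ 2 : ℝ)) : ℂ) := by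
    rw [huu', hvv', ht]; push_cast; ring
  rw [e, Complex.ofReal_re] at hQ
  nlinarith [norm_nonneg v, mul_nonneg (norm_nonneg (z : E)) (norm_nonneg u)]

lemma exists_multiplier [CompleteSpace H] (R : RKHSpace {z : E // ‖z‖ < 1} H)
    (hker : ∀ z w : {z : E // ‖z‖ < 1},
      R.toFun (R.kernelVec w) z = (1 - (inner ℂ (w : E) (z : E) : ℂ))⁻¹)
    (z : {z : E // ‖z‖ < 1}) :
    ∃ T : H →L[ℂ] H,
      (∀ (f : H) (x : {z : E // ‖z‖ < 1}),
        R.toFun (T f) x = (inner ℂ (z : E) (x : E) : ℂ) * R.toFun f x) ∧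
      (∀ w : {z : E // ‖z‖ < 1}, ContinuousLinearMap.adjoint T (R.kernelVec w)
          = conj (⟪(z : E), (w : E)⟫ : ℂ) • R.kernelVec w) ∧
      (∀ f : H, ‖T f‖ ≤ ‖(z : E)‖ * ‖f‖) := by
  classical
  set π : ({z : E // ‖z‖ < 1} →₀ ℂ) →ₗ[ℂ] H :=
    Finsupp.linearCombination ℂ R.kernelVec with hπ
  set Sh : ({z : E // ‖z‖ < 1} →₀ ℂ) →ₗ[ℂ] H :=
    Finsupp.linearCombination ℂ
      (fun w => (conj (⟪(z : E), (w : E)⟫ : ℂ)) • R.kernelVec w) with hSh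
  have hbound : ∀ c, ‖Sh c‖ ≤ ‖(z : E)‖ * ‖π c‖ := by
    intro c
    have h1 : π c = ∑ a ∈ c.support, c a • R.kernelVec a :=
      Finsupp.linearCombination_apply ℂ c
    have h2 : Sh c = ∑ a ∈ c.support, (c a * conj ⟪(z : E), (a : E)⟫) • R.kernelVec a := by
      rw [hSh, Finsupp.linearCombination_apply]
      refine Finset.sum_congr rfl fun a _ => ?_
      exact smul_smul (c a) _ _
    rw [h1, h2]
    exact norm_bound R hker z c.support c
  have hkerle : LinearMap.ker π ≤ LinearMap.ker Sh := by
    intro c hc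
    rw [LinearMap.mem_ker] at hc ⊢
    have := hbound c
    rw [hc, norm_zero, mul_zero] at this
    exact norm_le_zero_iff.1 this
  set D := LinearMap.range π with hD
  set e := LinearMap.quotKerEquivRange π with he
  set S₀ : D →ₗ[ℂ] H := ((LinearMap.ker π).liftQ Sh hkerle).comp e.symm.toLinearMap with hS₀def
  have hS₀ : ∀ c, S₀ ⟨π c, LinearMap.mem_range_self π c⟩ = Sh c := by
    intro c
    have h1 : e (Submodule.Quotient.mk c) = ⟨π c, LinearMap.mem_range_self π c⟩ := by
      apply Subtype.ext
      rw [he, LinearMap.quotKerEquivRange_apply_mk]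
    rw [show (⟨π c, LinearMap.mem_range_self π c⟩ : D) = e (Submodule.Quotient.mk c) from
      h1.symm]
    rw [hS₀def]
    simp only [LinearMap.coe_comp, LinearEquiv.coe_coe, Function.comp_apply,
      LinearEquiv.symm_apply_apply]
    exact Submodule.liftQ_apply _ Sh c
  have hS₀bound : ∀ d : D, ‖S₀ d‖ ≤ ‖(z : E)‖ * ‖d‖ := by
    rintro ⟨x, hx⟩
    obtain ⟨c, rfl⟩ := hx
    rw [show (⟨π c, ⟨c, rfl⟩⟩ : D) = ⟨π c, LinearMap.mem_range_self π c⟩ from rfl, hS₀ c]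
    exact hbound c
  set S₀c : D →L[ℂ] H := S₀.mkContinuous _ hS₀bound with hS₀c
  have hdense' : D.topologicalClosure = ⊤ := by
    rw [Submodule.topologicalClosure_eq_top_iff, Submodule.eq_bot_iff]
    intro h hh
    have hval : ∀ w, R.toFun h w = 0 := by
      intro w
      rw [R.reproducing]
      have hmem : R.kernelVec w ∈ D := by
        refine ⟨Finsupp.single w 1, ?_⟩
        rw [hπ, Finsupp.linearCombination_single, one_smul]
      exact hh (R.kernelVec w) hmem
    apply R.injective
    rw [map_zero]
    funext w
    exact hval w
  have hdense : DenseRange (D.subtypeL) := by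
    have : Dense (D : Set H) := by
      rw [Submodule.dense_iff_topologicalClosure_eq_top]
      exact hdense'
    rw [DenseRange, Submodule.coe_subtypeL', Submodule.coe_subtype]
    rwa [Subtype.range_coe]
  have hui : IsUniformInducing (D.subtypeL : D →L[ℂ] H) :=
    isometry_subtype_coe.isUniformInducing
  set S : H →L[ℂ] H := S₀c.extend D.subtypeL with hS
  have hSd : ∀ d : D, S (d : H) = S₀c d := by
    intro d
    rw [hS]
    exact ContinuousLinearMap.extend_eq (f := S₀c) (e := D.subtypeL) hdense hui d
  have hSk : ∀ w, S (R.kernelVec w) = conj (⟪(z : E), (w : E)⟫ : ℂ) • R.kernelVec w := by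
    intro w
    have hmem : R.kernelVec w ∈ D := by
      refine ⟨Finsupp.single w 1, ?_⟩
      rw [hπ, Finsupp.linearCombination_single, one_smul]
    have h0 : S (R.kernelVec w) = S₀c ⟨R.kernelVec w, hmem⟩ := hSd ⟨R.kernelVec w, hmem⟩
    rw [h0]
    have hval : π (Finsupp.single w 1) = R.kernelVec w := by
      rw [hπ, Finsupp.linearCombination_single, one_smul]
    have h2 : (⟨R.kernelVec w, hmem⟩ : D)
        = ⟨π (Finsupp.single w 1), LinearMap.mem_range_self π _⟩ := Subtype.ext hval.symm
    have h3 : S₀c ⟨R.kernelVec w, hmem⟩ = S₀ ⟨R.kernelVec w, hmem⟩ := rfl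
    rw [h3, h2, hS₀]
    rw [hSh, Finsupp.linearCombination_single, one_smul]
  have hSbound : ∀ h, ‖S h‖ ≤ ‖(z : E)‖ * ‖h‖ := by
    intro h
    refine DenseRange.induction_on hdense h ?_ ?_
    · exact isClosed_le (continuous_norm.comp S.continuous)
        (continuous_const.mul continuous_norm)
    · intro d
      show ‖S ((d : H))‖ ≤ ‖(z : E)‖ * ‖(d : H)‖
      rw [hSd d]
      exact hS₀bound d
  have hSnorm : ‖S‖ ≤ ‖(z : E)‖ :=
    ContinuousLinearMap.opNorm_le_bound S (norm_nonneg _) hSbound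
  refine ⟨ContinuousLinearMap.adjoint S, ?_, ?_, ?_⟩
  · intro f x
    rw [R.reproducing (ContinuousLinearMap.adjoint S f) x, R.reproducing f x,
      ContinuousLinearMap.adjoint_inner_right, hSk x, inner_smul_left, Complex.conj_conj]
  · intro w
    rw [ContinuousLinearMap.adjoint_adjoint, hSk w]
  · intro f
    calc ‖ContinuousLinearMap.adjoint S f‖ ≤ ‖ContinuousLinearMap.adjoint S‖ * ‖f‖ :=
          ContinuousLinearMap.le_opNorm _ f
      _ ≤ ‖(z : E)‖ * ‖f‖ := by
          rw [show ‖ContinuousLinearMap.adjoint S‖ = ‖S‖ from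
            ContinuousLinearMap.adjoint.norm_map S]
          exact mul_le_mul_of_nonneg_right hSnorm (norm_nonneg f)

end Aux

set_option maxHeartbeats 1000000 in
/-- Let `F ⊆ H²_d` be closed and co-invariant under all multiplication operators, such
that for every `w ∈ B_d` the compression of `M_{⟨·,w⟩}` to `F` is hyponormal.  If the
constant function `1` lies in `F` and `k_d(·,z) ∈ F` for some `z ∈ B_d`, then the
function `⟨·,z⟩` lies in `F`. -/
theorem linear_function_mem_of_kernel_mem
    {E H : Type*} [NormedAddCommGroup E] [InnerProductSpace ℂ E] [CompleteSpace E]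
    [NormedAddCommGroup H] [InnerProductSpace ℂ H] [CompleteSpace H]
    (R : RKHSpace {z : E // ‖z‖ < 1} H)
    (hker : ∀ z w : {z : E // ‖z‖ < 1},
      R.toFun (R.kernelVec w) z = (1 - (inner ℂ (w : E) (z : E) : ℂ))⁻¹)
    (F : Submodule ℂ H) [CompleteSpace F]
    (hcoinv : ∀ T : H →L[ℂ] H,
      (∃ φ : {z : E // ‖z‖ < 1} → ℂ, ∀ (f : H) (x : {z : E // ‖z‖ < 1}),
        R.toFun (T f) x = φ x * R.toFun f x) →
      ∀ f ∈ F, ContinuousLinearMap.adjoint T f ∈ F)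
    (hhypo : ∀ (w : {z : E // ‖z‖ < 1}) (T : H →L[ℂ] H),
      (∀ (f : H) (x : {z : E // ‖z‖ < 1}),
        R.toFun (T f) x = (inner ℂ (w : E) (x : E) : ℂ) * R.toFun f x) →
      ∀ f ∈ F, ‖ContinuousLinearMap.adjoint T f‖ ≤ ‖(F.orthogonalProjection (T f) : H)‖)
    (one : H) (hone : ∀ x, R.toFun one x = 1) (honeF : one ∈ F)
    (z : {z : E // ‖z‖ < 1}) (hz : R.kernelVec z ∈ F)
    (g : H) (hg : ∀ x : {z : E // ‖z‖ < 1}, R.toFun g x = (inner ℂ (z : E) (x : E) : ℂ)) :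
    g ∈ F := by
  classical
  obtain ⟨T, hTmult, hTadj, hTbound⟩ := exists_multiplier R hker z
  set r : ℝ := ‖(z : E)‖ with hrdef
  set t : ℝ := r ^ 2 with htdef
  have hr1 : r < 1 := z.2
  have hr0 : 0 ≤ r := norm_nonneg _
  have ht1 : t < 1 := by nlinarith
  have ht0 : 0 ≤ t := sq_nonneg r
  have h1t : (0 : ℝ) < 1 - t := by linarith
  have hzz : (inner ℂ (z : E) (z : E) : ℂ) = ((t : ℝ) : ℂ) := by
    rw [inner_self_eq_norm_sq_to_K, htdef, hrdef]
    norm_cast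
  set z0 : {z : E // ‖z‖ < 1} := ⟨0, by norm_num⟩ with hz0
  have hz0coe : ((z0 : E)) = 0 := rfl
  have honek : one = R.kernelVec z0 := by
    apply R.injective
    funext x
    rw [hone x, hker x z0]
    rw [hz0coe, inner_zero_left]
    norm_num
  set f : H := R.kernelVec z - one with hfdef
  have hf : f ∈ F := F.sub_mem hz honeF
  -- inner product values
  have i1 : ⟪R.kernelVec z, R.kernelVec z⟫ = (((1 - t)⁻¹ : ℝ) : ℂ) := by
    rw [← R.reproducing, hker z z, hzz]
    push_cast
    ring
  have i2 : ⟪R.kernelVec z, one⟫ = 1 := by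
    rw [← R.reproducing, hone]
  have i3 : ⟪one, R.kernelVec z⟫ = 1 := by
    rw [honek, ← R.reproducing, hker z0 z, hz0coe, inner_zero_right]
    norm_num
  have i4 : ⟪one, one⟫ = 1 := by
    nth_rewrite 1 [honek]
    rw [← R.reproducing, hone]
  have i5 : ⟪R.kernelVec z, g⟫ = ((t : ℝ) : ℂ) := by
    rw [← R.reproducing, hg z, hzz]
  have i6 : ⟪one, g⟫ = 0 := by
    rw [honek, ← R.reproducing, hg z0, hz0coe, inner_zero_right]
  have hnorm_one : ‖one‖ = 1 := by
    have h := inner_self_eq_norm_sq_to_K (𝕜 := ℂ) one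
    rw [i4] at h
    have h' : ((1 : ℝ) : ℂ) = ((‖one‖ ^ 2 : ℝ) : ℂ) := by
      rw [Complex.ofReal_one, Complex.ofReal_pow]
      exact h
    have h2 := Complex.ofReal_inj.mp h'
    nlinarith [norm_nonneg one]
  have hgT : g = T one := by
    apply R.injective
    funext x
    rw [hg x, hTmult one x, hone x, mul_one]
  have hgle : ‖g‖ ≤ r := by
    rw [hgT]
    calc ‖T one‖ ≤ r * ‖one‖ := hTbound one
      _ = r := by rw [hnorm_one, mul_one]
  -- T f = f - g
  have hTf : T f = f - g := by
    apply R.injective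
    funext x
    have hq : ‖(⟪(z : E), (x : E)⟫ : ℂ)‖ < 1 := ball_inner_lt x z
    have hq1 : (1 : ℂ) - ⟪(z : E), (x : E)⟫ ≠ 0 := by
      rw [sub_ne_zero]
      intro hcon
      rw [← hcon] at hq
      simp at hq
    rw [hTmult f x]
    have hfx : R.toFun f x = (1 - ⟪(z : E), (x : E)⟫)⁻¹ - 1 := by
      rw [hfdef, map_sub, Pi.sub_apply, hker x z, hone x]
    have hgoal : R.toFun (f - g) x = (1 - ⟪(z : E), (x : E)⟫)⁻¹ - 1 - ⟪(z : E), (x : E)⟫ := by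
      rw [map_sub, Pi.sub_apply, hfdef, map_sub, Pi.sub_apply, hker x z, hone x, hg x]
    rw [hfx, hgoal]
    field_simp
    ring
  -- adjoint T f
  have hadj : ContinuousLinearMap.adjoint T f = ((t : ℝ) : ℂ) • R.kernelVec z := by
    rw [hfdef, map_sub, hTadj z, honek, hTadj z0, hz0coe, inner_zero_right, map_zero,
      zero_smul, sub_zero, hzz, Complex.conj_ofReal]
  have hPineq := hhypo z T hTmult f hf
  -- norms
  have hkz2 : ‖R.kernelVec z‖ ^ 2 = (1 - t)⁻¹ := by
    have h := inner_self_eq_norm_sq_to_K (𝕜 := ℂ) (R.kernelVec z)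
    rw [i1] at h
    have h' : (((1 - t)⁻¹ : ℝ) : ℂ) = ((‖R.kernelVec z‖ ^ 2 : ℝ) : ℂ) := by
      rw [Complex.ofReal_pow]
      exact h
    exact (Complex.ofReal_inj.mp h').symm
  have hadjnorm : ‖ContinuousLinearMap.adjoint T f‖ ^ 2 = t ^ 2 * (1 - t)⁻¹ := by
    rw [hadj, norm_smul, Complex.norm_real, Real.norm_eq_abs, abs_of_nonneg ht0, mul_pow, hkz2]
  have hff : ⟪f, f⟫ = (((1 - t)⁻¹ - 1 : ℝ) : ℂ) := by
    rw [hfdef, inner_sub_sub_self, i1, i2, i3, i4]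
    push_cast
    ring
  have hfg : ⟪f, g⟫ = ((t : ℝ) : ℂ) := by
    rw [hfdef, inner_sub_left, i5, i6, sub_zero]
  have hgf : ⟪g, f⟫ = ((t : ℝ) : ℂ) := by
    rw [← inner_conj_symm, hfg, Complex.conj_ofReal]
  have hTf2 : ‖T f‖ ^ 2 = (1 - t)⁻¹ - 1 - 2 * t + ‖g‖ ^ 2 := by
    have hgg : ⟪g, g⟫ = ((‖g‖ ^ 2 : ℝ) : ℂ) := by
      rw [inner_self_eq_norm_sq_to_K]
      exact (Complex.ofReal_pow _ _).symm
    have hexp : ⟪f - g, f - g⟫ = (((1 - t)⁻¹ - 1 - 2 * t + ‖g‖ ^ 2 : ℝ) : ℂ) := by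
      rw [inner_sub_sub_self, hff, hfg, hgf, hgg]
      push_cast
      ring
    have h := inner_self_eq_norm_sq_to_K (𝕜 := ℂ) (f - g)
    rw [hexp] at h
    have h' : (((1 - t)⁻¹ - 1 - 2 * t + ‖g‖ ^ 2 : ℝ) : ℂ) = ((‖f - g‖ ^ 2 : ℝ) : ℂ) := by
      rw [Complex.ofReal_pow]
      exact h
    rw [hTf, ← Complex.ofReal_inj.mp h']
  -- projection argument
  set u : H := T f with hudef
  set p : H := (F.orthogonalProjection u : H) with hpdef
  have hpmem : p ∈ F := SetLike.coe_mem _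
  have horth : ⟪p, u - p⟫ = 0 := by
    have h1 : u - p ∈ Fᗮ := Submodule.sub_starProjection_mem_orthogonal u
    exact h1 p hpmem
  have hpyth : ‖u‖ ^ 2 = ‖p‖ ^ 2 + ‖u - p‖ ^ 2 := by
    have h := norm_add_sq (𝕜 := ℂ) p (u - p)
    rw [horth] at h
    simp only [map_zero, mul_zero, add_zero, add_sub_cancel] at h
    exact h
  have hple : ‖ContinuousLinearMap.adjoint T f‖ ^ 2 ≤ ‖p‖ ^ 2 :=
    pow_le_pow_left₀ (norm_nonneg _) hPineq 2
  have hg2 : ‖g‖ ^ 2 ≤ t := by nlinarith [norm_nonneg g]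
  have hinv : (1 - t) * (1 - t)⁻¹ = 1 := mul_inv_cancel₀ (ne_of_gt h1t)
  have hkey : (1 - t)⁻¹ - t ^ 2 * (1 - t)⁻¹ = 1 + t := by
    field_simp
    ring
  have hzero : ‖u - p‖ ^ 2 ≤ 0 := by
    have hu2 : ‖u‖ ^ 2 = (1 - t)⁻¹ - 1 - 2 * t + ‖g‖ ^ 2 := hTf2
    linarith [hadjnorm, hple, hpyth, hkey, hg2]
  have hup : u = p := by
    have h1 : ‖u - p‖ ^ 2 = 0 := le_antisymm hzero (sq_nonneg _)
    have h0 : ‖u - p‖ = 0 := by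
      nlinarith [norm_nonneg (u - p), sq_nonneg (‖u - p‖)]
    rw [← sub_eq_zero]
    exact norm_eq_zero.1 h0
  have huF : u ∈ F := by
    refine Submodule.starProjection_eq_self_iff.1 ?_
    show p = u
    exact hup.symm
  have hgeq : g = f - u := by
    rw [show u = f - g from hTf]
    abel
  rw [hgeq]
  exact F.sub_mem hf huF
end

section
/- Let H be a RKHS on X with kernel K, let b : X → B_d satisfy K(λ,μ) = (1 − ⟨b(λ), b(μ)⟩)⁻¹ for all λ, μ, and suppose the composition map f ↦ (f|_{b(X)}) ∘ b is a unitary from H²_d ⊖ I(b(X)) onto H. Then for any multiplier φ of H²_d, the function (φ|_{b(X)}) ∘ b is a multiplier of H, and under the unitary U the operator M_{(φ|_{b(X)}) ∘ b} corresponds to the compression P_F M_φ|_F, where F = H²_d ⊖ I(b(X)); i.e. U* M_{(φ|_Y) ∘ b} U = P_F M_φ|_F. -/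
set_option synthInstance.maxHeartbeats 1000000

/-- A reproducing kernel Hilbert space of `ℂ`-valued functions on `X`. -/
structure RKHS' (X : Type*) (H : Type*) [NormedAddCommGroup H] [InnerProductSpace ℂ H] where
  toFun : H →ₗ[ℂ] (X → ℂ)
  injective : Function.Injective toFun
  kernelVec : X → H
  reproducing : ∀ (f : H) (x : X), toFun f x = (inner ℂ (kernelVec x) f : ℂ)

/-- `I(Y)`: the subspace of functions in the RKHS vanishing on `Y`. -/
noncomputable def RKHS'.zeroSet {X H : Type*} [NormedAddCommGroup H] [InnerProductSpace ℂ H]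
    (R : RKHS' X H) (Y : Set X) : Submodule ℂ H :=
  ⨅ y ∈ Y, LinearMap.ker ((LinearMap.proj y).comp R.toFun)

/-- Suppose the RKHS `H` on `X` has kernel `K(λ,μ) = (1 - ⟨b(λ),b(μ)⟩)⁻¹` via
`b : X → B_d`, and `U : f ↦ (f|_{b(X)}) ∘ b` is a unitary from `F = H²_d ⊖ I(b(X))`
onto `H`.  Then for any multiplier `φ` of `H²_d`, the function `(φ|_{b(X)}) ∘ b` is a
multiplier of `H`, and `U* M_{(φ|_{b(X)}) ∘ b} U = P_F M_φ |_F`. -/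
theorem multiplier_compression_correspondence
    {X E H H2 : Type*}
    [NormedAddCommGroup E] [InnerProductSpace ℂ E] [CompleteSpace E]
    [NormedAddCommGroup H] [InnerProductSpace ℂ H] [CompleteSpace H]
    [NormedAddCommGroup H2] [InnerProductSpace ℂ H2] [CompleteSpace H2]
    (R : RKHS' X H) (b : X → {z : E // ‖z‖ < 1})
    (hbker : ∀ l m : X,
      R.toFun (R.kernelVec m) l = (1 - (inner ℂ ((b m) : E) ((b l) : E) : ℂ))⁻¹)
    (D : RKHS' {z : E // ‖z‖ < 1} H2)
    (hDker : ∀ z w : {z : E // ‖z‖ < 1},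
      D.toFun (D.kernelVec w) z = (1 - (inner ℂ (w : E) (z : E) : ℂ))⁻¹)
    [CompleteSpace ((D.zeroSet (Set.range b))ᗮ : Submodule ℂ H2)]
    (U : ((D.zeroSet (Set.range b))ᗮ : Submodule ℂ H2) ≃ₗᵢ[ℂ] H)
    (hU : ∀ (f : (D.zeroSet (Set.range b))ᗮ) (l : X),
      R.toFun (U f) l = D.toFun (f : H2) (b l))
    (φ : {z : E // ‖z‖ < 1} → ℂ) (T : H2 →L[ℂ] H2)
    (hT : ∀ (f : H2) (z : {z : E // ‖z‖ < 1}), D.toFun (T f) z = φ z * D.toFun f z) :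
    ∃ S : H →L[ℂ] H,
      (∀ (f : H) (l : X), R.toFun (S f) l = φ (b l) * R.toFun f l) ∧
      ∀ f : (D.zeroSet (Set.range b))ᗮ,
        U.symm (S (U f)) = Submodule.orthogonalProjectionOnto (D.zeroSet (Set.range b))ᗮ (T (f : H2)) := by
  classical
  let F : Submodule ℂ H2 := (D.zeroSet (Set.range b))ᗮ
  -- the kernel vectors at points of the range of b lie in F
  have hk : ∀ l : X, D.kernelVec (b l) ∈ F := by
    intro l
    rw [Submodule.mem_orthogonal]
    intro g hg
    have hg0 : D.toFun g (b l) = 0 := by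
      have h1 := (Submodule.mem_iInf _).1 hg (b l)
      have h2 := (Submodule.mem_iInf _).1 h1 ⟨l, rfl⟩
      simpa using h2
    rw [D.reproducing] at hg0
    rw [← inner_conj_symm, hg0, map_zero]
  -- projection onto F doesn't change values on range b
  have hproj : ∀ (h : H2) (l : X),
      D.toFun ((Submodule.orthogonalProjectionOnto F h : F) : H2) (b l) = D.toFun h (b l) := by
    intro h l
    rw [D.reproducing, D.reproducing]
    have hmem : h - (Submodule.orthogonalProjectionOnto F h : H2) ∈ Fᗮ :=
      F.sub_starProjection_mem_orthogonal h
    have := (Submodule.mem_orthogonal _ _).1 hmem _ (hk l)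
    rw [inner_sub_right] at this
    exact (sub_eq_zero.1 this).symm
  -- the multiplier on H : S = U ∘ P_F ∘ T ∘ incl ∘ U⁻¹
  refine ⟨(U.toLinearIsometry.toContinuousLinearMap).comp
      ((Submodule.orthogonalProjectionOnto F).comp
        (T.comp (F.subtypeL.comp U.symm.toLinearIsometry.toContinuousLinearMap))), ?_, ?_⟩
  · intro f l
    simp only [ContinuousLinearMap.comp_apply, LinearIsometry.coe_toContinuousLinearMap,
      LinearIsometryEquiv.coe_toLinearIsometry, Submodule.coe_subtypeL,
      Submodule.coe_subtype, Submodule.subtypeL_apply]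
    rw [hU, hproj, hT]
    have h2 := hU (U.symm f) l
    rw [U.apply_symm_apply] at h2
    rw [← h2]
  · intro f
    simp only [ContinuousLinearMap.comp_apply, LinearIsometry.coe_toContinuousLinearMap,
      LinearIsometryEquiv.coe_toLinearIsometry, Submodule.coe_subtypeL,
      Submodule.coe_subtype, LinearIsometryEquiv.symm_apply_apply,
      Submodule.subtypeL_apply]
    rfl
end
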